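/- If $\mathcal{C}$ is a classically simulatable class of partial decision problems, then $\exists\cdot\mathcal{C} \subseteq \exists^{Q}\cdot\mathcal{C}$: every partial decision problem obtained from $\mathcal{C}$ by a classical existential quantifier (ranging over binary strings of bounded length) is also obtained by a quantum existential quantifier (ranging over unit vectors of the corresponding size). -/
import Mathlib


/-- Qustrings of size `n`: vectors indexed by binary strings of length `n`. -/
abbrev QVec (n : ℕ) := (Fin n → Fin 2) → ℂ

/-- The type of all finite-size qustring witnesses (a vector together with its
size). -/
abbrev QWit := Σ n : ℕ, QVec n

/-- The classical basis vector `|x⟩`. -/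
def bvec {n : ℕ} (x : Fin n → Fin 2) : QVec n := fun y => if y = x then 1 else 0

/-- The embedding of a classical string `x` as the qustring witness `|x⟩`. -/
def emb {n : ℕ} (x : Fin n → Fin 2) : QWit := ⟨n, bvec x⟩

/-- The set of qustrings (unit vectors) of size `n`, viewed inside `QWit`. -/
def S (n : ℕ) : Set QWit := { ψ | ψ.1 = n ∧ ∑ y, Complex.normSq (ψ.2 y) = 1 }

variable {Φ : Type*}

/-- `B` is classically separable: whenever each classical string `x` of length
`n` satisfies `⟨x|ψ⟩ = 0` or `(|x⟩, φ) ∈ B`, the pair `(⟨n, ψ⟩, φ)` is in `B`. -/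
def ClassSep (B : Set (QWit × Φ)) : Prop :=
  ∀ (n : ℕ) (ψ : QVec n), (∑ y, Complex.normSq (ψ y)) = 1 → ∀ φ : Φ,
    (∀ x : Fin n → Fin 2, ψ x = 0 ∨ (emb x, φ) ∈ B) → ((⟨n, ψ⟩ : QWit), φ) ∈ B

/-- `𝒞` is classically simulatable: each `(A, B) ∈ 𝒞` admits `(C, D) ∈ 𝒞` with
classically separable components agreeing with `(A, B)` on all classical basis
states. -/
def ClassSim (𝒞 : Set (Set (QWit × Φ) × Set (QWit × Φ))) : Prop :=
  ∀ AB ∈ 𝒞, ∃ CD ∈ 𝒞, ClassSep CD.1 ∧ ClassSep CD.2 ∧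
    ∀ (n : ℕ) (x : Fin n → Fin 2) (φ : Φ),
      ((emb x, φ) ∈ AB.1 ↔ (emb x, φ) ∈ CD.1) ∧
      ((emb x, φ) ∈ AB.2 ↔ (emb x, φ) ∈ CD.2)

/-- The classical existential operator `∃·𝒞`: the witness ranges over classical
strings of length `p (ℓ φ)`, embedded as basis qustrings. -/
def existsC (ℓ : Φ → ℕ) (𝒞 : Set (Set (QWit × Φ) × Set (QWit × Φ))) :
    Set (Set Φ × Set Φ) :=
  { AB | ∃ p : ℕ → ℕ, ∃ CD ∈ 𝒞,
      (∀ φ ∈ AB.1, ∃ x : Fin (p (ℓ φ)) → Fin 2, (emb x, φ) ∈ CD.1) ∧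
      (∀ φ ∈ AB.2, ∀ x : Fin (p (ℓ φ)) → Fin 2, (emb x, φ) ∈ CD.2) }

/-- The quantum existential operator `∃^Q·𝒞`: the witness ranges over all unit
vectors of size `p (ℓ φ)`. -/
def existsQ (ℓ : Φ → ℕ) (𝒞 : Set (Set (QWit × Φ) × Set (QWit × Φ))) :
    Set (Set Φ × Set Φ) :=
  { AB | ∃ p : ℕ → ℕ, ∃ CD ∈ 𝒞,
      (∀ φ ∈ AB.1, ∃ ψ ∈ S (p (ℓ φ)), (ψ, φ) ∈ CD.1) ∧
      (∀ φ ∈ AB.2, ∀ ψ ∈ S (p (ℓ φ)), (ψ, φ) ∈ CD.2) }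

/-- If `𝒞` is classically simulatable, then `∃·𝒞 ⊆ ∃^Q·𝒞`. -/
lemma bvec_unit {n : ℕ} (x : Fin n → Fin 2) :
    ∑ y, Complex.normSq (bvec x y) = 1 := by
  simp [bvec, apply_ite Complex.normSq]

theorem existsC_subset_existsQ (ℓ : Φ → ℕ)
    (𝒞 : Set (Set (QWit × Φ) × Set (QWit × Φ))) (h : ClassSim 𝒞) :
    existsC ℓ 𝒞 ⊆ existsQ ℓ 𝒞 := by
  rintro AB ⟨p, CD, hCD, h1, h2⟩
  obtain ⟨CD', hCD', hsep1, hsep2, hagree⟩ := h CD hCD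
  refine ⟨p, CD', hCD', ?_, ?_⟩
  · intro φ hφ
    obtain ⟨x, hx⟩ := h1 φ hφ
    exact ⟨emb x, ⟨rfl, bvec_unit x⟩, ((hagree _ x φ).1).mp hx⟩
  · rintro φ hφ ⟨m, ψ⟩ ⟨hm, hunit⟩
    cases hm
    exact hsep2 _ ψ hunit φ (fun x => Or.inr (((hagree _ x φ).2).mp (h2 φ hφ x)))
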